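/- The three elements UP2, UP1, z2*D3 - w1*pi3 form a regular sequence on the polynomial ring R0[u11,u12,u13,u21,u22,u23,pi1,pi2,pi3,w1,z2]; in particular the ideal generated by the five entries of Brown's matrix b1 contains a regular sequence of length 3. -/

import Mathlib

open MvPolynomial

noncomputable section

/- The polynomial ring `R = R0[u11, u12, u13, u21, u22, u23, pi1, pi2, pi3, w1, z2]`,
with the eleven indeterminates indexed as
`0 ↦ u11, 1 ↦ u12, 2 ↦ u13, 3 ↦ u21, 4 ↦ u22, 5 ↦ u23, 6 ↦ pi1, 7 ↦ pi2, 8 ↦ pi3,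
9 ↦ w1, 10 ↦ z2`. -/

variable (R0 : Type*) [CommRing R0]

/-- `UP1 = u11*pi1 + u12*pi2 + u13*pi3`. -/
def UP1 : MvPolynomial (Fin 11) R0 := X 0 * X 6 + X 1 * X 7 + X 2 * X 8

/-- `UP2 = u21*pi1 + u22*pi2 + u23*pi3`. -/
def UP2 : MvPolynomial (Fin 11) R0 := X 3 * X 6 + X 4 * X 7 + X 5 * X 8

/-- `D1 = u12*u23 - u13*u22`. -/
def D1 : MvPolynomial (Fin 11) R0 := X 1 * X 5 - X 2 * X 4

/-- `D2 = -(u11*u23 - u13*u21)`. -/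
def D2 : MvPolynomial (Fin 11) R0 := -(X 0 * X 5 - X 2 * X 3)

/-- `D3 = u11*u22 - u12*u21`. -/
def D3 : MvPolynomial (Fin 11) R0 := X 0 * X 4 - X 1 * X 3

set_option linter.unusedSectionVars false

namespace B1Aux


variable {Rb : Type*} [CommRing Rb]

/-- weights: u11=2, u12=0, u13=13, u21=3, u22=10, u23=0, pi1=9, pi2=0, pi3=0, w1=0, z2=0 -/
def wt : Fin 11 → ℕ := ![2,0,13,3,10,0,9,0,0,0,0]

def W (μ : Fin 11 →₀ ℕ) : ℕ := ∑ i, μ i * wt i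

lemma W_add (a b : Fin 11 →₀ ℕ) : W (a + b) = W a + W b := by
  simp [W, add_mul, Finset.sum_add_distrib]

lemma W_single (i : Fin 11) (k : ℕ) : W (Finsupp.single i k) = k * wt i := by
  simp [W, Finsupp.single_apply, ite_mul, Finset.sum_ite_eq]

lemma W_sub {e μ : Fin 11 →₀ ℕ} (h : e ≤ μ) : W e + W (μ - e) = W μ := by
  have : ∀ i, e i ≤ μ i := Finsupp.le_def.mp h
  simp only [W, Finsupp.tsub_apply, ← Finset.sum_add_distrib, ← add_mul]
  exact Finset.sum_congr rfl fun i _ => by rw [Nat.add_sub_cancel' (this i)]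

def Φ : MvPolynomial (Fin 11) Rb →+* Polynomial (MvPolynomial (Fin 11) Rb) :=
  eval₂Hom (Polynomial.C.comp MvPolynomial.C)
    (fun i => Polynomial.C (X i) * Polynomial.X ^ wt i)

lemma Φ_C (a : Rb) : Φ (C a) = Polynomial.C (C a) := by simp [Φ]

lemma Φ_X (i : Fin 11) :
    Φ (X i : MvPolynomial (Fin 11) Rb) = Polynomial.C (X i) * Polynomial.X ^ wt i := by
  simp [Φ]

lemma Φ_monomial (μ : Fin 11 →₀ ℕ) (a : Rb) :
    Φ (monomial μ a) = Polynomial.C (monomial μ a) * Polynomial.X ^ W μ := by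
  induction μ using Finsupp.induction with
  | zero => simp [monomial_zero', Φ_C, W]
  | single_add i k ν hi hk ih =>
    have h1 : (monomial (Finsupp.single i k + ν) a : MvPolynomial (Fin 11) Rb)
        = X i ^ k * monomial ν a := by
      rw [X_pow_eq_monomial, monomial_mul, one_mul]
    rw [h1, map_mul, map_pow, Φ_X, ih, mul_pow, ← Polynomial.C_pow, ← pow_mul,
      W_add, W_single, Polynomial.C_mul, pow_add, Nat.mul_comm (wt i) k]
    ring

lemma coeff_coeff_Φ (p : MvPolynomial (Fin 11) Rb) (k : ℕ) (μ : Fin 11 →₀ ℕ) :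
    coeff μ ((Φ p).coeff k) = if W μ = k then coeff μ p else 0 := by
  classical
  have h : Φ p = ∑ ν ∈ p.support, Polynomial.C (monomial ν (coeff ν p)) * Polynomial.X ^ W ν := by
    conv_lhs => rw [p.as_sum]
    rw [map_sum]
    exact Finset.sum_congr rfl fun ν _ => Φ_monomial ν (coeff ν p)
  rw [h, Polynomial.finset_sum_coeff]
  have h2 : ∀ ν ∈ p.support,
      (Polynomial.C (monomial ν (coeff ν p)) * Polynomial.X ^ W ν).coeff k
        = if W ν = k then monomial ν (coeff ν p) else 0 := by
    intro ν _
    rw [Polynomial.coeff_C_mul, Polynomial.coeff_X_pow]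
    by_cases hk : W ν = k
    · simp [hk]
    · simp [hk, Ne.symm hk]
  rw [Finset.sum_congr rfl h2, MvPolynomial.coeff_sum]
  have h3 : ∀ ν ∈ p.support,
      coeff μ (if W ν = k then (monomial ν (coeff ν p) : MvPolynomial (Fin 11) Rb) else 0)
        = if ν = μ then (if W ν = k then coeff ν p else 0) else 0 := by
    intro ν _
    rcases eq_or_ne ν μ with rfl | hne
    · rw [if_pos rfl]
      split_ifs <;> simp [coeff_monomial]
    · rw [if_neg hne]
      split_ifs <;> simp [coeff_monomial, hne]
  rw [Finset.sum_congr rfl h3, Finset.sum_ite_eq']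
  by_cases hμ : μ ∈ p.support
  · simp [hμ]
  · rw [mem_support_iff, not_not] at hμ
    simp [mem_support_iff, hμ]

lemma hom_coeff_Φ (p : MvPolynomial (Fin 11) Rb) (k : ℕ) :
    ∀ μ ∈ ((Φ p).coeff k).support, W μ = k := by
  intro μ hμ
  rw [mem_support_iff] at hμ
  by_contra h
  rw [coeff_coeff_Φ, if_neg h] at hμ
  exact hμ rfl

lemma Φ_ne_zero {p : MvPolynomial (Fin 11) Rb} (hp : p ≠ 0) : Φ p ≠ 0 := by
  obtain ⟨μ, hμ⟩ := MvPolynomial.support_nonempty.mpr hp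
  rw [mem_support_iff] at hμ
  intro h
  apply hμ
  have := coeff_coeff_Φ p (W μ) μ
  rw [h] at this
  simpa using this.symm

lemma Φ_hom {q : MvPolynomial (Fin 11) Rb} {n : ℕ} (h : ∀ μ ∈ q.support, W μ = n) :
    Φ q = Polynomial.C q * Polynomial.X ^ n := by
  conv_lhs => rw [q.as_sum]
  rw [map_sum]
  have : ∀ ν ∈ q.support,
      Φ (monomial ν (coeff ν q)) = Polynomial.C (monomial ν (coeff ν q)) * Polynomial.X ^ n := by
    intro ν hν; rw [Φ_monomial, h ν hν]
  rw [Finset.sum_congr rfl this, ← Finset.sum_mul, ← map_sum, ← q.as_sum]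




/-- divide by a monomial all of whose exponents bound the support -/
lemma dvd_of_support_le {e : Fin 11 →₀ ℕ} {z : MvPolynomial (Fin 11) Rb}
    (hz : ∀ μ ∈ z.support, e ≤ μ) :
    ∃ q, monomial e 1 * q = z ∧ ∀ μ' ∈ q.support, ∃ ν ∈ z.support, ν = e + μ' := by
  classical
  refine ⟨∑ μ ∈ z.support, monomial (μ - e) (coeff μ z), ?_, ?_⟩
  · rw [Finset.mul_sum]
    have : ∀ μ ∈ z.support,
        monomial e (1 : Rb) * monomial (μ - e) (coeff μ z) = monomial μ (coeff μ z) := by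
      intro μ hμ
      rw [monomial_mul, one_mul, add_tsub_cancel_of_le (hz μ hμ)]
    rw [Finset.sum_congr rfl this, ← z.as_sum]
  · intro μ' hμ'
    rw [mem_support_iff] at hμ'
    have h2 : coeff μ' (∑ μ ∈ z.support, (monomial (μ - e)) (coeff μ z))
        = ∑ μ ∈ z.support, coeff μ' (monomial (μ - e) (coeff μ z)) := MvPolynomial.coeff_sum _ _ _
    rw [h2] at hμ'
    obtain ⟨ν, hν, hne⟩ := Finset.exists_ne_zero_of_sum_ne_zero hμ'
    refine ⟨ν, hν, ?_⟩
    rw [coeff_monomial] at hne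
    have : ν - e = μ' := by by_contra h; rw [if_neg h] at hne; exact hne rfl
    rw [← this, add_tsub_cancel_of_le (hz ν hν)]

/-- the part of z with support satisfying P -/
lemma exists_split (P : (Fin 11 →₀ ℕ) → Prop) [DecidablePred P] (z : MvPolynomial (Fin 11) Rb) :
    ∃ z1 z2, z = z1 + z2 ∧ (∀ μ, coeff μ z1 = if P μ then coeff μ z else 0) ∧
      (∀ μ, coeff μ z2 = if P μ then 0 else coeff μ z) := by
  refine ⟨∑ μ ∈ z.support.filter P, monomial μ (coeff μ z),
    ∑ μ ∈ z.support.filter (fun ν => ¬ P ν), monomial μ (coeff μ z), ?_, ?_, ?_⟩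
  · conv_lhs => rw [z.as_sum]
    exact (Finset.sum_filter_add_sum_filter_not _ _ _).symm
  · intro μ
    rw [MvPolynomial.coeff_sum]
    have hterm : ∀ ν ∈ z.support.filter P,
        coeff μ (monomial ν (coeff ν z)) = if ν = μ then coeff ν z else 0 :=
      fun ν _ => coeff_monomial μ ν _
    rw [Finset.sum_congr rfl hterm, Finset.sum_ite_eq']
    by_cases hμ : μ ∈ z.support.filter P
    · rw [if_pos hμ, if_pos (Finset.mem_filter.mp hμ).2]
    · rw [if_neg hμ]
      by_cases hP : P μ
      · rw [if_pos hP]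
        have : μ ∉ z.support := fun hc => hμ (Finset.mem_filter.mpr ⟨hc, hP⟩)
        rw [mem_support_iff, not_not] at this
        exact this.symm
      · rw [if_neg hP]
  · intro μ
    rw [MvPolynomial.coeff_sum]
    have hterm : ∀ ν ∈ z.support.filter (fun ν => ¬ P ν),
        coeff μ (monomial ν (coeff ν z)) = if ν = μ then coeff ν z else 0 :=
      fun ν _ => coeff_monomial μ ν _
    rw [Finset.sum_congr rfl hterm, Finset.sum_ite_eq']
    by_cases hμ : μ ∈ z.support.filter (fun ν => ¬ P ν)
    · rw [if_pos hμ, if_neg (Finset.mem_filter.mp hμ).2]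
    · rw [if_neg hμ]
      by_cases hP : P μ
      · rw [if_pos hP]
      · rw [if_neg hP]
        have : μ ∉ z.support := fun hc => hμ (Finset.mem_filter.mpr ⟨hc, hP⟩)
        rw [mem_support_iff, not_not] at this
        exact this.symm

/-- key coefficient-comparison: disjointness forces support divisibility -/
lemma md2 {ef e1 e2 : Fin 11 →₀ ℕ}
    (h1 : ∀ i, e1 i ≠ 0 → ef i = 0) (h2 : ∀ i, e2 i ≠ 0 → ef i = 0)
    {z y1 y2 : MvPolynomial (Fin 11) Rb}
    (heq : monomial ef 1 * z = monomial e1 1 * y1 + monomial e2 1 * y2) :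
    ∀ μ ∈ z.support, e1 ≤ μ ∨ e2 ≤ μ := by
  intro μ hμ
  rw [mem_support_iff] at hμ
  by_contra hc
  push_neg at hc
  apply hμ
  have := congrArg (coeff (ef + μ)) heq
  rw [coeff_add, coeff_monomial_mul', coeff_monomial_mul', coeff_monomial_mul'] at this
  rw [if_pos le_self_add, add_tsub_cancel_left, one_mul] at this
  have hn1 : ¬ e1 ≤ ef + μ := by
    intro hle
    apply hc.1
    rw [Finsupp.le_def] at hle ⊢
    intro i
    rcases eq_or_ne (e1 i) 0 with h | h
    · simp [h]
    · have := hle i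
      rw [Finsupp.add_apply, h1 i h, zero_add] at this
      exact this
  have hn2 : ¬ e2 ≤ ef + μ := by
    intro hle
    apply hc.2
    rw [Finsupp.le_def] at hle ⊢
    intro i
    rcases eq_or_ne (e2 i) 0 with h | h
    · simp [h]
    · have := hle i
      rw [Finsupp.add_apply, h2 i h, zero_add] at this
      exact this
  rw [if_neg hn1, if_neg hn2, add_zero] at this
  exact this

/-- coefficient of product at sum of degree bounds -/
lemma coeff_mul_of_le {Rc : Type*} [CommRing Rc] {P Q : Polynomial Rc} {p q : ℕ}
    (hp : P.natDegree ≤ p) (hq : Q.natDegree ≤ q) :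
    (P * Q).coeff (p + q) = P.coeff p * Q.coeff q := by
  rw [Polynomial.coeff_mul]
  apply Finset.sum_eq_single (p, q)
  · rintro ⟨i, j⟩ hij hne
    rw [Finset.HasAntidiagonal.mem_antidiagonal] at hij
    have : p < i ∨ q < j := by
      by_contra hc
      push_neg at hc
      apply hne
      have : i = p ∧ j = q := by omega
      simp [this.1, this.2]
    rcases this with h | h
    · rw [Polynomial.coeff_eq_zero_of_natDegree_lt (lt_of_le_of_lt hp h), zero_mul]
    · rw [Polynomial.coeff_eq_zero_of_natDegree_lt (lt_of_le_of_lt hq h), mul_zero]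
  · intro h
    simp [Finset.HasAntidiagonal.mem_antidiagonal] at h

lemma natDegree_lt_of_coeff_zero {Rc : Type*} [CommRing Rc] {P : Polynomial Rc} {n : ℕ}
    (h1 : P.natDegree ≤ n) (h2 : P.coeff n = 0) : P = 0 ∨ P.natDegree < n := by
  by_cases hP : P = 0
  · exact Or.inl hP
  · right
    rcases lt_or_eq_of_le h1 with h | h
    · exact h
    · exfalso
      apply Polynomial.leadingCoeff_ne_zero.mpr hP
      rw [Polynomial.leadingCoeff, h, h2]


-- ### generator facts

def eA : Fin 11 →₀ ℕ := Finsupp.single 3 1 + Finsupp.single 6 1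
def eB : Fin 11 →₀ ℕ := Finsupp.single 2 1 + Finsupp.single 8 1
def eF : Fin 11 →₀ ℕ := Finsupp.single 10 1 + (Finsupp.single 0 1 + Finsupp.single 4 1)

lemma X_mul_X (i j : Fin 11) :
    (X i * X j : MvPolynomial (Fin 11) Rb)
      = monomial (Finsupp.single i 1 + Finsupp.single j 1) 1 := by
  rw [MvPolynomial.X, MvPolynomial.X, monomial_mul, one_mul]

lemma W_eA : W eA = 12 := by simp [eA, W_add, W_single]; rfl
lemma W_eB : W eB = 13 := by simp [eB, W_add, W_single]; rfl
lemma W_eF : W eF = 12 := by simp [eF, W_add, W_single]; rfl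

lemma Φ_UP2 : Φ (UP2 Rb) = Polynomial.C (monomial eA 1) * Polynomial.X ^ 12
    + (Polynomial.C (X 4 * X 7) * Polynomial.X ^ 10 + Polynomial.C (X 5 * X 8)) := by
  have h3 : wt 3 = 3 := rfl
  have h6 : wt 6 = 9 := rfl
  have h4 : wt 4 = 10 := rfl
  have h7 : wt 7 = 0 := rfl
  have h5 : wt 5 = 0 := rfl
  have h8 : wt 8 = 0 := rfl
  have heA : (monomial eA (1 : Rb)) = X 3 * X 6 := by rw [eA, ← X_mul_X]
  rw [UP2, map_add, map_add, map_mul, map_mul, map_mul, Φ_X, Φ_X, Φ_X, Φ_X, Φ_X, Φ_X,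
    h3, h6, h4, h7, h5, h8, heA]
  push_cast [Polynomial.C_mul]
  ring

lemma Φ_UP1 : Φ (UP1 Rb) = Polynomial.C (monomial eB 1) * Polynomial.X ^ 13
    + (Polynomial.C (X 0 * X 6) * Polynomial.X ^ 11 + Polynomial.C (X 1 * X 7)) := by
  have h0 : wt 0 = 2 := rfl
  have h6 : wt 6 = 9 := rfl
  have h1 : wt 1 = 0 := rfl
  have h7 : wt 7 = 0 := rfl
  have h2 : wt 2 = 13 := rfl
  have h8 : wt 8 = 0 := rfl
  have heB : (monomial eB (1 : Rb)) = X 2 * X 8 := by rw [eB, ← X_mul_X]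
  rw [UP1, map_add, map_add, map_mul, map_mul, map_mul, Φ_X, Φ_X, Φ_X, Φ_X, Φ_X, Φ_X,
    h0, h6, h1, h7, h2, h8, heB]
  push_cast [Polynomial.C_mul]
  ring

lemma Φ_F : Φ (X 10 * D3 Rb - X 9 * X 8)
    = Polynomial.C (monomial eF 1) * Polynomial.X ^ 12
    + (- (Polynomial.C (X 10 * (X 1 * X 3) : MvPolynomial (Fin 11) Rb) * Polynomial.X ^ 3) - Polynomial.C (X 9 * X 8)) := by
  have h10 : wt 10 = 0 := rfl
  have h0 : wt 0 = 2 := rfl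
  have h4 : wt 4 = 10 := rfl
  have h1 : wt 1 = 0 := rfl
  have h3 : wt 3 = 3 := rfl
  have h9 : wt 9 = 0 := rfl
  have h8 : wt 8 = 0 := rfl
  have hF : (X 10 * D3 Rb - X 9 * X 8 : MvPolynomial (Fin 11) Rb)
      = X 10 * (X 0 * X 4) - X 10 * (X 1 * X 3) - X 9 * X 8 := by rw [D3]; ring
  have heF : (monomial eF (1 : Rb)) = X 10 * (X 0 * X 4) := by
    rw [X_mul_X, MvPolynomial.X, monomial_mul, one_mul, eF]
  rw [hF, map_sub, map_sub, map_mul, map_mul, map_mul, map_mul, map_mul,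
    Φ_X, Φ_X, Φ_X, Φ_X, Φ_X, Φ_X, Φ_X, h10, h0, h4, h1, h3, h9, h8, heF]
  push_cast [Polynomial.C_mul]
  ring

section DomainFacts
variable [IsDomain Rb]

lemma pack {G : MvPolynomial (Fin 11) Rb} {e : Fin 11 →₀ ℕ} {δ : ℕ}
    {Q : Polynomial (MvPolynomial (Fin 11) Rb)}
    (h : Φ G = Polynomial.C (monomial e 1) * Polynomial.X ^ δ + Q)
    (hQ : Q.natDegree < δ) :
    (Φ G).natDegree = δ ∧ (Φ G).leadingCoeff = monomial e 1 ∧ G ≠ 0 := by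
  have hne : (monomial e (1 : Rb)) ≠ 0 := by
    rw [Ne, MvPolynomial.monomial_eq_zero]
    exact one_ne_zero
  have hQc : Q.coeff δ = 0 := Polynomial.coeff_eq_zero_of_natDegree_lt hQ
  have hcoeff : (Φ G).coeff δ = monomial e 1 := by
    rw [h, Polynomial.coeff_add, Polynomial.coeff_C_mul, Polynomial.coeff_X_pow,
      if_pos rfl, mul_one, hQc, add_zero]
  have hub : (Φ G).natDegree ≤ δ := by
    rw [h]
    apply le_trans (Polynomial.natDegree_add_le _ _)
    exact max_le (Polynomial.natDegree_C_mul_X_pow_le _ _) (le_of_lt hQ)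
  have hlb : δ ≤ (Φ G).natDegree :=
    Polynomial.le_natDegree_of_ne_zero (by rw [hcoeff]; exact hne)
  have hdeg : (Φ G).natDegree = δ := le_antisymm hub hlb
  refine ⟨hdeg, ?_, ?_⟩
  · rw [Polynomial.leadingCoeff, hdeg, hcoeff]
  · intro hG
    rw [hG, map_zero] at hcoeff
    exact hne (by rw [← hcoeff]; simp)

lemma factsA : (Φ (UP2 Rb)).natDegree = 12 ∧ (Φ (UP2 Rb)).leadingCoeff = monomial eA 1
    ∧ UP2 Rb ≠ 0 := by
  apply pack (Φ_UP2)
  apply lt_of_le_of_lt (Polynomial.natDegree_add_le _ _)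
  have h1 := Polynomial.natDegree_C_mul_X_pow_le (X 4 * X 7 : MvPolynomial (Fin 11) Rb) 10
  have h2 := Polynomial.natDegree_C (X 5 * X 8 : MvPolynomial (Fin 11) Rb)
  simp only [max_lt_iff]
  omega

lemma factsB : (Φ (UP1 Rb)).natDegree = 13 ∧ (Φ (UP1 Rb)).leadingCoeff = monomial eB 1
    ∧ UP1 Rb ≠ 0 := by
  apply pack (Φ_UP1)
  apply lt_of_le_of_lt (Polynomial.natDegree_add_le _ _)
  have h1 := Polynomial.natDegree_C_mul_X_pow_le (X 0 * X 6 : MvPolynomial (Fin 11) Rb) 11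
  have h2 := Polynomial.natDegree_C (X 1 * X 7 : MvPolynomial (Fin 11) Rb)
  simp only [max_lt_iff]
  omega

lemma factsF : (Φ (X 10 * D3 Rb - X 9 * X 8)).natDegree = 12
    ∧ (Φ (X 10 * D3 Rb - X 9 * X 8)).leadingCoeff = monomial eF 1
    ∧ (X 10 * D3 Rb - X 9 * X 8 : MvPolynomial (Fin 11) Rb) ≠ 0 := by
  apply pack (Φ_F)
  apply lt_of_le_of_lt (Polynomial.natDegree_sub_le _ _)
  have h1 : (-(Polynomial.C (X 10 * (X 1 * X 3) : MvPolynomial (Fin 11) Rb)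
      * Polynomial.X ^ 3)).natDegree ≤ 3 := by
    rw [Polynomial.natDegree_neg]
    exact Polynomial.natDegree_C_mul_X_pow_le _ _
  have h2 := Polynomial.natDegree_C (X 9 * X 8 : MvPolynomial (Fin 11) Rb)
  simp only [max_lt_iff]
  omega

lemma mul_facts {G : MvPolynomial (Fin 11) Rb} {e : Fin 11 →₀ ℕ} {δ : ℕ}
    (hdeg : (Φ G).natDegree = δ) (hlc : (Φ G).leadingCoeff = monomial e 1)
    {x : MvPolynomial (Fin 11) Rb} (hx : x ≠ 0) :
    (Φ (G * x)).natDegree = δ + (Φ x).natDegree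
      ∧ (Φ (G * x)).leadingCoeff = monomial e 1 * (Φ x).leadingCoeff
      ∧ Φ (G * x) ≠ 0 := by
  have hG : Φ G ≠ 0 := by
    intro h
    rw [h] at hlc
    simp only [Polynomial.leadingCoeff_zero] at hlc
    exact MvPolynomial.monomial_eq_zero.not.mpr one_ne_zero hlc.symm
  have hΦx : Φ x ≠ 0 := Φ_ne_zero hx
  rw [map_mul]
  exact ⟨by rw [Polynomial.natDegree_mul hG hΦx, hdeg],
    by rw [Polynomial.leadingCoeff_mul, hlc], mul_ne_zero hG hΦx⟩

end DomainFacts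

lemma piece {G : MvPolynomial (Fin 11) Rb} {δ : ℕ} {e : Fin 11 →₀ ℕ}
    (hWe : W e = δ) (hdeg : (Φ G).natDegree ≤ δ) (hco : (Φ G).coeff δ = monomial e 1)
    {z : MvPolynomial (Fin 11) Rb} {n : ℕ}
    (hz : ∀ μ ∈ z.support, W μ = n) (hle : ∀ μ ∈ z.support, e ≤ μ) :
    ∃ q, monomial e 1 * q = z ∧ (Φ (G * q)).natDegree ≤ n ∧ (Φ (G * q)).coeff n = z := by
  by_cases hz0 : z = 0
  · exact ⟨0, by simp [hz0], by simp, by simp [hz0]⟩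
  obtain ⟨q, hq, hsupp⟩ := dvd_of_support_le hle
  obtain ⟨μ0, hμ0⟩ := MvPolynomial.support_nonempty.mpr hz0
  have hδn : δ ≤ n := by
    have h1 := hz μ0 hμ0
    have h2 := W_sub (hle μ0 hμ0)
    rw [hWe] at h2
    omega
  obtain ⟨m, rfl⟩ : ∃ m, n = δ + m := ⟨n - δ, by omega⟩
  have hqhom : ∀ μ' ∈ q.support, W μ' = m := by
    intro μ' hμ'
    obtain ⟨ν, hν, hh⟩ := hsupp μ' hμ'
    subst hh
    have h1 := hz _ hν
    rw [W_add, hWe] at h1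
    omega
  have hΦq : Φ q = Polynomial.C q * Polynomial.X ^ m := Φ_hom hqhom
  refine ⟨q, hq, ?_, ?_⟩
  · rw [map_mul, hΦq]
    apply le_trans (Polynomial.natDegree_mul_le)
    have := Polynomial.natDegree_C_mul_X_pow_le q m
    omega
  · rw [map_mul, hΦq, coeff_mul_of_le hdeg (Polynomial.natDegree_C_mul_X_pow_le _ _), hco,
      Polynomial.coeff_C_mul, Polynomial.coeff_X_pow, if_pos rfl, mul_one, hq]

-- ### disjointness of leading exponents
lemma dAB : ∀ i, eA i ≠ 0 → eB i = 0 := by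
  intro i
  fin_cases i <;> simp [eA, eB, Finsupp.single_apply]
lemma dBA : ∀ i, eB i ≠ 0 → eA i = 0 := by
  intro i
  fin_cases i <;> simp [eA, eB, Finsupp.single_apply]
lemma dAF : ∀ i, eA i ≠ 0 → eF i = 0 := by
  intro i
  fin_cases i <;> simp [eA, eF, Finsupp.single_apply]
lemma dBF : ∀ i, eB i ≠ 0 → eF i = 0 := by
  intro i
  fin_cases i <;> simp [eB, eF, Finsupp.single_apply]

section Main
variable [IsDomain Rb]

lemma coA : (Φ (UP2 Rb)).coeff 12 = monomial eA 1 := by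
  rw [← (factsA (Rb := Rb)).1]
  exact (factsA (Rb := Rb)).2.1

lemma coB : (Φ (UP1 Rb)).coeff 13 = monomial eB 1 := by
  rw [← (factsB (Rb := Rb)).1]
  exact (factsB (Rb := Rb)).2.1

lemma max_attains {P Q : Polynomial (MvPolynomial (Fin 11) Rb)} {m : ℕ}
    (hm : max P.natDegree Q.natDegree = m) (h0 : 0 < m)
    (hsum : P.coeff m + Q.coeff m = 0) : P.natDegree = m ∧ Q.natDegree = m := by
  have hP : P.natDegree ≤ m := hm ▸ le_max_left _ _
  have hQ : Q.natDegree ≤ m := hm ▸ le_max_right _ _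
  have hch : P.natDegree = m ∨ Q.natDegree = m := by
    rcases max_choice P.natDegree Q.natDegree with h | h
    · exact Or.inl (h.symm.trans hm)
    · exact Or.inr (h.symm.trans hm)
  constructor
  · by_contra h
    have hlt : P.natDegree < m := lt_of_le_of_ne hP h
    have hQm : Q.natDegree = m := by tauto
    have h1 : P.coeff m = 0 := Polynomial.coeff_eq_zero_of_natDegree_lt hlt
    have h2 : Q.coeff m = 0 := by rw [h1, zero_add] at hsum; exact hsum
    have hQ0 : Q ≠ 0 := fun hc => by simp [hc] at hQm; omega
    apply Polynomial.leadingCoeff_ne_zero.mpr hQ0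
    rw [Polynomial.leadingCoeff, hQm, h2]
  · by_contra h
    have hlt : Q.natDegree < m := lt_of_le_of_ne hQ h
    have hPm : P.natDegree = m := by tauto
    have h1 : Q.coeff m = 0 := Polynomial.coeff_eq_zero_of_natDegree_lt hlt
    have h2 : P.coeff m = 0 := by rw [h1, add_zero] at hsum; exact hsum
    have hP0 : P ≠ 0 := fun hc => by simp [hc] at hPm; omega
    apply Polynomial.leadingCoeff_ne_zero.mpr hP0
    rw [Polynomial.leadingCoeff, hPm, h2]

lemma straighten : ∀ (M : ℕ) (a b : MvPolynomial (Fin 11) Rb),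
    (Φ (UP2 Rb * a)).natDegree ≤ M → (Φ (UP1 Rb * b)).natDegree ≤ M →
    ∃ a' b', UP2 Rb * a' + UP1 Rb * b' = UP2 Rb * a + UP1 Rb * b ∧
      (Φ (UP2 Rb * a')).natDegree ≤ (Φ (UP2 Rb * a + UP1 Rb * b)).natDegree ∧
      (Φ (UP1 Rb * b')).natDegree ≤ (Φ (UP2 Rb * a + UP1 Rb * b)).natDegree := by
  intro M
  induction M with
  | zero =>
    intro a b ha hb
    exact ⟨a, b, rfl, by omega, by omega⟩
  | succ M ih =>
    intro a b ha hb
    by_cases hBoth : (Φ (UP2 Rb * a)).natDegree ≤ (Φ (UP2 Rb * a + UP1 Rb * b)).natDegree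
        ∧ (Φ (UP1 Rb * b)).natDegree ≤ (Φ (UP2 Rb * a + UP1 Rb * b)).natDegree
    · exact ⟨a, b, rfl, hBoth.1, hBoth.2⟩
    set v := UP2 Rb * a + UP1 Rb * b with hv
    set D := (Φ v).natDegree with hD
    set m := max (Φ (UP2 Rb * a)).natDegree (Φ (UP1 Rb * b)).natDegree with hm
    have hDm : D < m := by
      push_neg at hBoth
      rcases Nat.lt_or_ge D (Φ (UP2 Rb * a)).natDegree with h | h
      · exact lt_of_lt_of_le h (le_max_left _ _)
      · exact lt_of_lt_of_le (hBoth h) (le_max_right _ _)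
    have hm0 : 0 < m := Nat.lt_of_le_of_lt (Nat.zero_le _) hDm
    have hcv : (Φ v).coeff m = 0 := Polynomial.coeff_eq_zero_of_natDegree_lt hDm
    have hsum : (Φ (UP2 Rb * a)).coeff m + (Φ (UP1 Rb * b)).coeff m = 0 := by
      rw [← Polynomial.coeff_add, ← map_add, ← hv, hcv]
    obtain ⟨hdA, hdB⟩ := max_attains hm.symm hm0 hsum
    have hΦa0 : Φ (UP2 Rb * a) ≠ 0 := fun hc => by
      rw [hc, Polynomial.natDegree_zero] at hdA; omega
    have hΦb0 : Φ (UP1 Rb * b) ≠ 0 := fun hc => by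
      rw [hc, Polynomial.natDegree_zero] at hdB; omega
    have ha0 : a ≠ 0 := fun hc => hΦa0 (by rw [hc, mul_zero, map_zero])
    have hb0 : b ≠ 0 := fun hc => hΦb0 (by rw [hc, mul_zero, map_zero])
    have hfa := mul_facts (factsA (Rb := Rb)).1 (factsA (Rb := Rb)).2.1 ha0
    have hfb := mul_facts (factsB (Rb := Rb)).1 (factsB (Rb := Rb)).2.1 hb0
    have hma : m = 12 + (Φ a).natDegree := by rw [← hdA, hfa.1]
    have hmb : m = 13 + (Φ b).natDegree := by rw [← hdB, hfb.1]
    have hlead : monomial eA 1 * (Φ a).leadingCoeff + monomial eB 1 * (Φ b).leadingCoeff = 0 := by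
      have h1 : (Φ (UP2 Rb * a)).coeff m = monomial eA 1 * (Φ a).leadingCoeff := by
        rw [← hdA]; exact hfa.2.1
      have h2 : (Φ (UP1 Rb * b)).coeff m = monomial eB 1 * (Φ b).leadingCoeff := by
        rw [← hdB]; exact hfb.2.1
      rw [h1, h2] at hsum; exact hsum
    have heq2 : monomial eA 1 * (Φ a).leadingCoeff
        = monomial eB 1 * (-(Φ b).leadingCoeff) + monomial eB 1 * 0 := by
      rw [mul_zero, add_zero]; linear_combination hlead
    have hdiv : ∀ μ ∈ ((Φ a).leadingCoeff).support, eB ≤ μ := by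
      intro μ hμ
      rcases md2 dBA dBA heq2 μ hμ with h | h <;> exact h
    have hhom : ∀ μ ∈ ((Φ a).leadingCoeff).support, W μ = (Φ a).natDegree :=
      hom_coeff_Φ a (Φ a).natDegree
    obtain ⟨q, hq, hdq, hcq⟩ := piece W_eB (factsB (Rb := Rb)).1.le coB hhom hdiv
    set a' := a - UP1 Rb * q with ha'
    set b' := b + UP2 Rb * q with hb'
    have heqv : UP2 Rb * a' + UP1 Rb * b' = v := by rw [ha', hb', hv]; ring
    -- degree of a' strictly drops
    have hca' : (Φ a').coeff (Φ a).natDegree = 0 := by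
      rw [ha', map_sub, Polynomial.coeff_sub, hcq]
      exact sub_self _
    have hda' : (Φ a').natDegree ≤ (Φ a).natDegree := by
      rw [ha', map_sub]
      exact le_trans (Polynomial.natDegree_sub_le _ _) (max_le le_rfl hdq)
    have hdA' : (Φ (UP2 Rb * a')).natDegree < m := by
      rcases natDegree_lt_of_coeff_zero hda' hca' with h0 | hlt
      · have : a' = 0 := by by_contra hc; exact (Φ_ne_zero hc) h0
        rw [this, mul_zero, map_zero, Polynomial.natDegree_zero]; omega
      · by_cases ha'0 : a' = 0
        · rw [ha'0, mul_zero, map_zero, Polynomial.natDegree_zero]; omega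
        · have := (mul_facts (factsA (Rb := Rb)).1 (factsA (Rb := Rb)).2.1 ha'0).1
          rw [this]; omega
    have hdB'le : (Φ (UP1 Rb * b')).natDegree ≤ m := by
      have h1 : UP1 Rb * b' = UP1 Rb * b + UP2 Rb * (UP1 Rb * q) := by rw [hb']; ring
      rw [h1, map_add]
      apply le_trans (Polynomial.natDegree_add_le _ _)
      apply max_le (le_of_eq hdB)
      rw [map_mul]
      apply le_trans (Polynomial.natDegree_mul_le)
      rw [(factsA (Rb := Rb)).1]
      omega
    have hdB' : (Φ (UP1 Rb * b')).natDegree < m := by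
      rcases lt_or_eq_of_le hdB'le with h | h
      · exact h
      · exfalso
        have hb'0 : Φ (UP1 Rb * b') ≠ 0 := fun hc => by
          rw [hc, Polynomial.natDegree_zero] at h; omega
        have hc1 : (Φ v).coeff m = (Φ (UP2 Rb * a')).coeff m + (Φ (UP1 Rb * b')).coeff m := by
          rw [← Polynomial.coeff_add, ← map_add, heqv]
        have hc2 : (Φ (UP2 Rb * a')).coeff m = 0 := Polynomial.coeff_eq_zero_of_natDegree_lt hdA'
        have hc3 : (Φ (UP1 Rb * b')).coeff m = 0 := by
          rw [hcv, hc2, zero_add] at hc1; exact hc1.symm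
        apply Polynomial.leadingCoeff_ne_zero.mpr hb'0
        rw [Polynomial.leadingCoeff, h, hc3]
    have hmM : m ≤ M + 1 := max_le ha hb
    obtain ⟨a'', b'', heq'', h1'', h2''⟩ := ih a' b' (by omega) (by omega)
    rw [heqv] at heq'' h1'' h2''
    exact ⟨a'', b'', heq'', h1'', h2''⟩

lemma colon_B : ∀ x : MvPolynomial (Fin 11) Rb,
    UP1 Rb * x ∈ Ideal.span {UP2 Rb} → x ∈ Ideal.span {UP2 Rb} := by
  suffices H : ∀ n (x : MvPolynomial (Fin 11) Rb), (Φ x).natDegree ≤ n →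
      UP1 Rb * x ∈ Ideal.span {UP2 Rb} → x ∈ Ideal.span {UP2 Rb} from
    fun x => H _ x le_rfl
  intro n
  induction n using Nat.strong_induction_on with
  | _ n ih =>
    intro x hn hmem
    by_cases hx : x = 0
    · rw [hx]; exact Ideal.zero_mem _
    obtain ⟨b, hb⟩ := Ideal.mem_span_singleton'.mp hmem
    rw [mul_comm] at hb
    have hbne : b ≠ 0 := by
      intro h
      rw [h, mul_zero] at hb
      exact mul_ne_zero (factsB (Rb := Rb)).2.2 hx hb.symm
    have hfx := mul_facts (factsB (Rb := Rb)).1 (factsB (Rb := Rb)).2.1 hx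
    have hfb := mul_facts (factsA (Rb := Rb)).1 (factsA (Rb := Rb)).2.1 hbne
    have hlead : monomial eB 1 * (Φ x).leadingCoeff
        = monomial eA 1 * (Φ b).leadingCoeff + monomial eA 1 * 0 := by
      rw [mul_zero, add_zero, ← hfx.2.1, ← hfb.2.1, hb]
    have hdiv : ∀ μ ∈ ((Φ x).leadingCoeff).support, eA ≤ μ := by
      intro μ hμ
      rcases md2 dAB dAB hlead μ hμ with h | h <;> exact h
    have hhom : ∀ μ ∈ ((Φ x).leadingCoeff).support, W μ = (Φ x).natDegree :=
      hom_coeff_Φ x (Φ x).natDegree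
    obtain ⟨q, hq, hdq, hcq⟩ := piece W_eA (factsA (Rb := Rb)).1.le coA hhom hdiv
    have hca' : (Φ (x - UP2 Rb * q)).coeff (Φ x).natDegree = 0 := by
      rw [map_sub, Polynomial.coeff_sub, hcq]
      exact sub_self _
    have hda' : (Φ (x - UP2 Rb * q)).natDegree ≤ (Φ x).natDegree := by
      rw [map_sub]
      exact le_trans (Polynomial.natDegree_sub_le _ _) (max_le le_rfl hdq)
    have hq2 : UP2 Rb * q ∈ Ideal.span {UP2 Rb} :=
      Ideal.mem_span_singleton'.mpr ⟨q, mul_comm _ _⟩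
    rcases natDegree_lt_of_coeff_zero hda' hca' with h0 | hlt
    · have h1 : x - UP2 Rb * q = 0 := by
        by_contra hc
        exact (Φ_ne_zero hc) h0
      have h2 : x = UP2 Rb * q := by linear_combination h1
      rw [h2]
      exact hq2
    · have hmem' : UP1 Rb * (x - UP2 Rb * q) ∈ Ideal.span {UP2 Rb} := by
        have h1 : UP1 Rb * (x - UP2 Rb * q) = UP1 Rb * x - (UP1 Rb * q) * UP2 Rb := by ring
        rw [h1]
        exact Ideal.sub_mem _ hmem (Ideal.mem_span_singleton'.mpr ⟨UP1 Rb * q, rfl⟩)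
      have hx' := ih _ (lt_of_lt_of_le hlt hn) _ le_rfl hmem'
      have h2 : x = (x - UP2 Rb * q) + UP2 Rb * q := by ring
      rw [h2]
      exact Ideal.add_mem _ hx' hq2

lemma coeff_factor {G : MvPolynomial (Fin 11) Rb} {δ : ℕ} {e : Fin 11 →₀ ℕ}
    (hdeg : (Φ G).natDegree = δ) (hlc : (Φ G).leadingCoeff = monomial e 1)
    (a : MvPolynomial (Fin 11) Rb) (m : ℕ) (h : (Φ (G * a)).natDegree ≤ m) :
    ∃ c, (Φ (G * a)).coeff m = monomial e 1 * c := by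
  by_cases ha : a = 0
  · exact ⟨0, by rw [ha, mul_zero, map_zero]; simp⟩
  have hf := mul_facts hdeg hlc ha
  rcases lt_or_eq_of_le h with hlt | heq
  · exact ⟨0, by rw [Polynomial.coeff_eq_zero_of_natDegree_lt hlt, mul_zero]⟩
  · refine ⟨(Φ a).leadingCoeff, ?_⟩
    rw [← heq]
    exact hf.2.1

lemma colon_C : ∀ x : MvPolynomial (Fin 11) Rb,
    (X 10 * D3 Rb - X 9 * X 8) * x ∈ Ideal.span {UP2 Rb, UP1 Rb} →
      x ∈ Ideal.span {UP2 Rb, UP1 Rb} := by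
  suffices H : ∀ n (x : MvPolynomial (Fin 11) Rb), (Φ x).natDegree ≤ n →
      (X 10 * D3 Rb - X 9 * X 8) * x ∈ Ideal.span {UP2 Rb, UP1 Rb} →
        x ∈ Ideal.span {UP2 Rb, UP1 Rb} from fun x => H _ x le_rfl
  intro n
  induction n using Nat.strong_induction_on with
  | _ n ih =>
    intro x hn hmem
    by_cases hx : x = 0
    · rw [hx]; exact Ideal.zero_mem _
    obtain ⟨a, b, hab⟩ := Ideal.mem_span_pair.mp hmem
    set F : MvPolynomial (Fin 11) Rb := X 10 * D3 Rb - X 9 * X 8 with hF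
    have hre : UP2 Rb * a + UP1 Rb * b = F * x := by rw [← hab]; ring
    obtain ⟨a', b', heq, hda, hdb⟩ := straighten
      (max (Φ (UP2 Rb * a)).natDegree (Φ (UP1 Rb * b)).natDegree) a b
      (le_max_left _ _) (le_max_right _ _)
    rw [hre] at heq hda hdb
    have hfx := mul_facts (factsF (Rb := Rb)).1 (factsF (Rb := Rb)).2.1 hx
    set D := (Φ (F * x)).natDegree with hD
    obtain ⟨ca, hca⟩ := coeff_factor (factsA (Rb := Rb)).1 (factsA (Rb := Rb)).2.1 a' D hda
    obtain ⟨cb, hcb⟩ := coeff_factor (factsB (Rb := Rb)).1 (factsB (Rb := Rb)).2.1 b' D hdb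
    have hleadeq : monomial eF 1 * (Φ x).leadingCoeff
        = monomial eA 1 * ca + monomial eB 1 * cb := by
      have h1 : (Φ (F * x)).coeff D = monomial eF 1 * (Φ x).leadingCoeff := by
        rw [hD]
        exact hfx.2.1
      rw [← heq, map_add, Polynomial.coeff_add, hca, hcb] at h1
      exact h1.symm
    have hsplit := md2 dAF dBF hleadeq
    classical
    obtain ⟨z1, z2, hz12, hc1, hc2⟩ := exists_split (fun μ => eA ≤ μ) (Φ x).leadingCoeff
    have hs1 : ∀ μ ∈ z1.support, eA ≤ μ := by
      intro μ hμ
      rw [mem_support_iff] at hμ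
      by_contra hc
      rw [hc1 μ, if_neg hc] at hμ
      exact hμ rfl
    have hsub1 : ∀ μ ∈ z1.support, μ ∈ ((Φ x).leadingCoeff).support := by
      intro μ hμ
      rw [mem_support_iff] at hμ ⊢
      intro hc
      rw [hc1 μ, hc] at hμ
      simp at hμ
    have hs2 : ∀ μ ∈ z2.support, eB ≤ μ := by
      intro μ hμ
      rw [mem_support_iff] at hμ
      by_cases hc : eA ≤ μ
      · rw [hc2 μ, if_pos hc] at hμ; exact absurd rfl hμ
      · have hm : μ ∈ ((Φ x).leadingCoeff).support := by
          rw [mem_support_iff]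
          intro h0
          rw [hc2 μ, if_neg hc, h0] at hμ
          exact hμ rfl
        rcases hsplit μ hm with h | h
        · exact absurd h hc
        · exact h
    have hsub2 : ∀ μ ∈ z2.support, μ ∈ ((Φ x).leadingCoeff).support := by
      intro μ hμ
      rw [mem_support_iff] at hμ ⊢
      intro hc
      rw [hc2 μ, hc] at hμ
      simp at hμ
    have hhom : ∀ μ ∈ ((Φ x).leadingCoeff).support, W μ = (Φ x).natDegree :=
      hom_coeff_Φ x (Φ x).natDegree
    obtain ⟨q1, hq1, hd1, hcq1⟩ := piece W_eA (factsA (Rb := Rb)).1.le coA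
      (fun μ hμ => hhom μ (hsub1 μ hμ)) hs1
    obtain ⟨q2, hq2, hd2, hcq2⟩ := piece W_eB (factsB (Rb := Rb)).1.le coB
      (fun μ hμ => hhom μ (hsub2 μ hμ)) hs2
    set x' : MvPolynomial (Fin 11) Rb := x - UP2 Rb * q1 - UP1 Rb * q2 with hx'
    have hmemq : UP2 Rb * q1 + UP1 Rb * q2 ∈ Ideal.span {UP2 Rb, UP1 Rb} :=
      Ideal.mem_span_pair.mpr ⟨q1, q2, by ring⟩
    have hcx' : (Φ x').coeff (Φ x).natDegree = 0 := by
      rw [hx', map_sub, map_sub, Polynomial.coeff_sub, Polynomial.coeff_sub, hcq1, hcq2]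
      have : (Φ x).coeff (Φ x).natDegree = z1 + z2 := hz12 ▸ rfl
      rw [this]
      ring
    have hdx' : (Φ x').natDegree ≤ (Φ x).natDegree := by
      rw [hx', map_sub, map_sub]
      apply le_trans (Polynomial.natDegree_sub_le _ _)
      apply max_le
      · exact le_trans (Polynomial.natDegree_sub_le _ _) (max_le le_rfl hd1)
      · exact hd2
    rcases natDegree_lt_of_coeff_zero hdx' hcx' with h0 | hlt
    · have h1 : x' = 0 := by
        by_contra hc
        exact (Φ_ne_zero hc) h0
      have h2 : x = UP2 Rb * q1 + UP1 Rb * q2 := by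
        rw [hx'] at h1
        linear_combination h1
      rw [h2]
      exact hmemq
    · have hmem' : F * x' ∈ Ideal.span {UP2 Rb, UP1 Rb} := by
        have h1 : F * x' = F * x - ((F * q1) * UP2 Rb + (F * q2) * UP1 Rb) := by
          rw [hx']; ring
        rw [h1]
        exact Ideal.sub_mem _ hmem (Ideal.mem_span_pair.mpr ⟨F * q1, F * q2, rfl⟩)
      have hx'' := ih _ (lt_of_lt_of_le hlt hn) _ le_rfl hmem'
      have h2 : x = x' + (UP2 Rb * q1 + UP1 Rb * q2) := by rw [hx']; ring
      rw [h2]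
      exact Ideal.add_mem _ hx'' hmemq

lemma isSMulRegular_quot {A : Type*} [CommRing A] {p : Submodule A A} {f : A}
    (h : ∀ x, f * x ∈ p → x ∈ p) : IsSMulRegular (A ⧸ p) f := by
  intro a b hab
  obtain ⟨x, rfl⟩ := Submodule.Quotient.mk_surjective p a
  obtain ⟨y, rfl⟩ := Submodule.Quotient.mk_surjective p b
  dsimp only at hab
  rw [← Submodule.Quotient.mk_smul, ← Submodule.Quotient.mk_smul, Submodule.Quotient.eq] at hab
  rw [Submodule.Quotient.eq]
  have h2 : f • x - f • y = f * (x - y) := by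
    rw [smul_eq_mul, smul_eq_mul]
    ring
  rw [h2] at hab
  exact h _ hab

lemma quot_colon {A : Type*} [CommRing A] (I : Ideal A) (f : A)
    (h : ∀ x, f * x ∈ I → x ∈ I) : IsSMulRegular (A ⧸ (I • ⊤ : Submodule A A)) f := by
  have hp : (I • ⊤ : Submodule A A) = I := by
    rw [Ideal.smul_eq_mul, Ideal.mul_top]
  apply isSMulRegular_quot
  intro x hx
  rw [hp] at hx ⊢
  exact h x hx

lemma ofList_pair : Ideal.ofList [UP2 Rb, UP1 Rb] = Ideal.span {UP2 Rb, UP1 Rb} := by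
  rw [Ideal.ofList_cons, Ideal.ofList_singleton, ← Ideal.span_union, Set.singleton_union]

theorem main_reg : RingTheory.Sequence.IsRegular (MvPolynomial (Fin 11) Rb)
    [UP2 Rb, UP1 Rb, X 10 * D3 Rb - X 9 * X 8] := by
  rw [RingTheory.Sequence.isRegular_iff]
  constructor
  · rw [RingTheory.Sequence.isWeaklyRegular_iff]
    intro i hi
    have hi3 : i < 3 := by simpa using hi
    interval_cases i
    · simp only [List.take_zero, List.getElem_cons_zero]
      apply quot_colon
      intro x hx
      rw [Ideal.ofList_nil, Ideal.mem_bot] at hx ⊢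
      rcases mul_eq_zero.mp hx with h | h
      · exact absurd h (factsA (Rb := Rb)).2.2
      · exact h
    · simp only [List.take_succ_cons, List.take_zero, List.getElem_cons_succ,
        List.getElem_cons_zero]
      apply quot_colon
      intro x hx
      rw [Ideal.ofList_singleton] at hx ⊢
      exact colon_B x hx
    · simp only [List.take_succ_cons, List.take_zero, List.getElem_cons_succ,
        List.getElem_cons_zero]
      apply quot_colon
      intro x hx
      rw [ofList_pair] at hx ⊢
      exact colon_C x hx
  · intro hT
    have h1 : (1 : MvPolynomial (Fin 11) Rb)
        ∈ (Ideal.ofList [UP2 Rb, UP1 Rb, X 10 * D3 Rb - X 9 * X 8] • ⊤ :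
            Submodule (MvPolynomial (Fin 11) Rb) (MvPolynomial (Fin 11) Rb)) :=
      hT ▸ Submodule.mem_top
    rw [Ideal.smul_eq_mul, Ideal.mul_top] at h1
    have hle : Ideal.ofList [UP2 Rb, UP1 Rb, X 10 * D3 Rb - X 9 * X 8]
        ≤ RingHom.ker (constantCoeff : MvPolynomial (Fin 11) Rb →+* Rb) := by
      rw [Ideal.span_le]
      intro g hg
      simp only [Set.mem_setOf_eq, List.mem_cons, List.not_mem_nil, or_false] at hg
      rcases hg with rfl | rfl | rfl <;>
        · rw [SetLike.mem_coe, RingHom.mem_ker]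
          simp [UP2, UP1, D3]
    have h2 := hle h1
    rw [RingHom.mem_ker, map_one] at h2
    exact one_ne_zero h2

end Main
end B1Aux

/-- `UP2`, `UP1`, `z2*D3 - w1*pi3` form a regular sequence on
`R = R0[u11, …, u23, pi1, pi2, pi3, w1, z2]`; in particular the ideal generated by the
five entries of Brown's matrix `b1` contains a regular sequence of length three. -/
theorem b1_entries_contain_regular_sequence [IsDomain R0] [IsNoetherianRing R0] :
    RingTheory.Sequence.IsRegular (MvPolynomial (Fin 11) R0)
      [UP2 R0, UP1 R0, X 10 * D3 R0 - X 9 * X 8] ∧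
    ∃ rs : List (MvPolynomial (Fin 11) R0), rs.length = 3 ∧
      (∀ x ∈ rs, x ∈ Ideal.span {UP1 R0, UP2 R0,
        X 10 * D1 R0 - X 9 * X 6,
        X 10 * D2 R0 - X 9 * X 7,
        X 10 * D3 R0 - X 9 * X 8}) ∧
      RingTheory.Sequence.IsRegular (MvPolynomial (Fin 11) R0) rs := by
  have hreg := B1Aux.main_reg (Rb := R0)
  refine ⟨hreg, [UP2 R0, UP1 R0, X 10 * D3 R0 - X 9 * X 8], rfl, ?_, hreg⟩
  intro x hx
  simp only [List.mem_cons, List.not_mem_nil, or_false] at hx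
  rcases hx with rfl | rfl | rfl <;> apply Ideal.subset_span <;> simp

end
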